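/- If (x, y, z₁, z₂) ∈ U and u(x, y, z₁, z₂) ≤ 0, then w(x, y, z₁, z₂) ≤ 16. -/
import Mathlib


noncomputable section

/-- The quantity `u` from the dimensionless formulation of the compactness bound. -/
def u (x y z₁ z₂ : ℝ) : ℝ :=
  3 * x ^ 2 + (y - z₁ - z₂) ^ 2 - 2 * (x - y) - 2 * (z₂ * (4 * x - 3) + z₁)

/-- The quantity `w` from the dimensionless formulation of the compactness bound
(defined for `x < 1`). -/
def w (x y z₁ z₂ : ℝ) : ℝ :=
  (4 - 3 * x + y - z₁ - z₂) ^ 2 / (1 - x)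

theorem w_le_sixteen_of_u_nonpos (x y z₁ z₂ : ℝ)
    (hx0 : 0 ≤ x) (hx1 : x < 1) (hy : 0 ≤ y) (hz₁ : 0 ≤ z₁) (hz₂ : 0 ≤ z₂)
    (hz : z₁ + z₂ ≤ 1) (hu : u x y z₁ z₂ ≤ 0) :
    w x y z₁ z₂ ≤ 16 := by
  have hpos : (0:ℝ) < 1 - x := by linarith
  rw [w, div_le_iff₀ hpos]
  set s := y - z₁ - z₂ with hs
  have h1 : (s + 1) ^ 2 ≤ (1 + 3 * x) * (1 - x) := by
    have hy' : y = s + z₁ + z₂ := by rw [hs]; ring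
    have hz2 : 0 ≤ (1 - x) * z₂ := by positivity
    rw [u] at hu
    nlinarith [hu]
  nlinarith [h1, sq_nonneg (s + x), sq_nonneg (1 - x), mul_nonneg hpos.le hpos.le]
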